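/- arXiv:2312.06885 — 8 statements merged into one kernel-verified Lean document; each statement's English description precedes it below -/
import Mathlib

section
/- Let f : ℝⁿ → ℝⁿ, let A be a real n×n matrix, set F_n(x) := f(x) − A x, let λ ∈ ℝ and w ∈ ℝⁿ. Suppose h : ℝⁿ → ℝ is differentiable and satisfies ⟨∇h(x), f(x)⟩ − λ h(x) + ⟨w, F_n(x)⟩ = 0 for all x, and that γ : ℝ → ℝⁿ is a differentiable solution curve with γ′(τ) = f(γ(τ)) and that τ ↦ ⟨w, F_n(γ(τ))⟩ is continuous. Then for every t ≥ 0, h(γ(0)) = e^{−λ t} h(γ(t)) + ∫₀ᵗ e^{−λ τ} ⟨w, F_n(γ(τ))⟩ dτ. -/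
open scoped RealInnerProductSpace

/-- Path-integral solution formula for the linear PDE satisfied by the
nonlinear part `h` of a principal Koopman eigenfunction:
`h(γ(0)) = e^{−λt} h(γ(t)) + ∫₀ᵗ e^{−λτ} ⟨w, Fₙ(γ(τ))⟩ dτ` for all `t ≥ 0`. -/
theorem stmt1 {n : ℕ}
    (f : EuclideanSpace ℝ (Fin n) → EuclideanSpace ℝ (Fin n))
    (A : Matrix (Fin n) (Fin n) ℝ)
    (Fn : EuclideanSpace ℝ (Fin n) → EuclideanSpace ℝ (Fin n))
    (hFn : ∀ x, Fn x = f x - Matrix.toEuclideanLin A x)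
    (lam : ℝ) (w : EuclideanSpace ℝ (Fin n))
    (h : EuclideanSpace ℝ (Fin n) → ℝ)
    (hdiff : Differentiable ℝ h)
    (hpde : ∀ x, ⟪gradient h x, f x⟫ - lam * h x + ⟪w, Fn x⟫ = 0)
    (γ : ℝ → EuclideanSpace ℝ (Fin n))
    (hγ : ∀ τ, HasDerivAt γ (f (γ τ)) τ)
    (hcont : Continuous fun τ => (⟪w, Fn (γ τ)⟫ : ℝ)) :
    ∀ t : ℝ, 0 ≤ t →
      h (γ 0) = Real.exp (-lam * t) * h (γ t)
        + ∫ τ in (0 : ℝ)..t, Real.exp (-lam * τ) * ⟪w, Fn (γ τ)⟫ := by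
  intro t ht
  -- derivative of g τ = exp(-lam*τ) * h (γ τ)
  have key : ∀ τ : ℝ, HasDerivAt (fun s => Real.exp (-lam * s) * h (γ s))
      (-(Real.exp (-lam * τ) * ⟪w, Fn (γ τ)⟫)) τ := by
    intro τ
    have hgrad : HasFDerivAt h
        ((InnerProductSpace.toDual ℝ _ (gradient h (γ τ)) : EuclideanSpace ℝ (Fin n) →L[ℝ] ℝ)) (γ τ) :=
      (hdiff (γ τ)).hasGradientAt.hasFDerivAt
    have hcomp : HasDerivAt (fun s => h (γ s)) (⟪gradient h (γ τ), f (γ τ)⟫) τ := by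
      have := hgrad.comp_hasDerivAt τ (hγ τ)
      rw [InnerProductSpace.toDual_apply_apply] at this
      exact this
    have hexp : HasDerivAt (fun s : ℝ => Real.exp (-lam * s))
        (Real.exp (-lam * τ) * (-lam)) τ := by
      have : HasDerivAt (fun s : ℝ => -lam * s) (-lam) τ := by
        simpa using (hasDerivAt_id τ).const_mul (-lam)
      exact this.exp
    have := hexp.mul hcomp
    refine this.congr_deriv ?_
    have hp := hpde (γ τ)
    linear_combination (Real.exp (-lam * τ)) * hp
  have hint : ∫ τ in (0:ℝ)..t, -(Real.exp (-lam * τ) * ⟪w, Fn (γ τ)⟫)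
      = Real.exp (-lam * t) * h (γ t) - Real.exp (-lam * 0) * h (γ 0) := by
    apply intervalIntegral.integral_eq_sub_of_hasDerivAt
    · intro τ _
      exact key τ
    · apply Continuous.intervalIntegrable
      exact ((Real.continuous_exp.comp (continuous_const.mul continuous_id)).mul hcont).neg
  rw [intervalIntegral.integral_neg] at hint
  simp only [neg_mul, neg_zero, mul_zero, Real.exp_zero, one_mul] at hint ⊢
  linarith
end

section
/- Let f : ℝⁿ → ℝⁿ, let A be a real n×n matrix, set F_n(x) := f(x) − A x, let λ > 0 be a real number and w ∈ ℝⁿ. Suppose h : ℝⁿ → ℝ is differentiable and satisfies ⟨∇h(x), f(x)⟩ − λ h(x) + ⟨w, F_n(x)⟩ = 0 for all x, γ : ℝ → ℝⁿ is a differentiable solution curve with γ′(τ) = f(γ(τ)), τ ↦ ⟨w, F_n(γ(τ))⟩ is continuous, and T ≥ 0. Then |h(γ(0)) − ∫₀ᵀ e^{−λ τ} ⟨w, F_n(γ(τ))⟩ dτ| ≤ |h(γ(T))|. -/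
open scoped RealInnerProductSpace

/-- For `λ > 0`, the truncated path-integral approximation of `h` at the
initial condition satisfies `|h(γ(0)) − ∫₀ᵀ e^{−λτ}⟨w, Fₙ(γ(τ))⟩ dτ| ≤ |h(γ(T))|`. -/
theorem stmt2 {n : ℕ}
    (f : EuclideanSpace ℝ (Fin n) → EuclideanSpace ℝ (Fin n))
    (A : Matrix (Fin n) (Fin n) ℝ)
    (Fn : EuclideanSpace ℝ (Fin n) → EuclideanSpace ℝ (Fin n))
    (hFn : ∀ x, Fn x = f x - Matrix.toEuclideanLin A x)
    (lam : ℝ) (hlam : 0 < lam) (w : EuclideanSpace ℝ (Fin n))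
    (h : EuclideanSpace ℝ (Fin n) → ℝ)
    (hdiff : Differentiable ℝ h)
    (hpde : ∀ x, ⟪gradient h x, f x⟫ - lam * h x + ⟪w, Fn x⟫ = 0)
    (γ : ℝ → EuclideanSpace ℝ (Fin n))
    (hγ : ∀ τ, HasDerivAt γ (f (γ τ)) τ)
    (hcont : Continuous fun τ => (⟪w, Fn (γ τ)⟫ : ℝ))
    (T : ℝ) (hT : 0 ≤ T) :
    |h (γ 0) - ∫ τ in (0 : ℝ)..T, Real.exp (-lam * τ) * ⟪w, Fn (γ τ)⟫|
      ≤ |h (γ T)| := by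
  set g : ℝ → ℝ := fun τ => Real.exp (-lam * τ) * h (γ τ) with hg
  have hderiv : ∀ τ : ℝ, HasDerivAt g (-(Real.exp (-lam * τ) * ⟪w, Fn (γ τ)⟫)) τ := by
    intro τ
    have hexp : HasDerivAt (fun τ : ℝ => Real.exp (-lam * τ))
        (Real.exp (-lam * τ) * (-lam)) τ := by
      have : HasDerivAt (fun τ : ℝ => -lam * τ) (-lam) τ := by
        simpa using (hasDerivAt_id τ).const_mul (-lam)
      exact this.exp
    have hcomp : HasDerivAt (fun τ => h (γ τ)) (⟪gradient h (γ τ), f (γ τ)⟫) τ := by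
      have hgrad := (hdiff (γ τ)).hasGradientAt
      have := hgrad.hasFDerivAt.comp_hasDerivAt τ (hγ τ)
      have e : (⟪gradient h (γ τ), f (γ τ)⟫ : ℝ) = (fderiv ℝ h (γ τ)) (f (γ τ)) := by simp
      simp at this
      rw [e]; exact this
    have := hexp.mul hcomp
    refine this.congr_deriv ?_
    have hp := hpde (γ τ)
    have heq : (⟪gradient h (γ τ), f (γ τ)⟫ : ℝ) = lam * h (γ τ) - ⟪w, Fn (γ τ)⟫ := by
      linarith
    rw [heq]; ring
  have hint : ∫ τ in (0:ℝ)..T, -(Real.exp (-lam * τ) * ⟪w, Fn (γ τ)⟫) = g T - g 0 := by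
    apply intervalIntegral.integral_eq_sub_of_hasDerivAt
    · intro τ _; exact hderiv τ
    · apply Continuous.intervalIntegrable
      exact ((Real.continuous_exp.comp (continuous_const.mul continuous_id)).mul hcont).neg
  have hint' : ∫ τ in (0:ℝ)..T, Real.exp (-lam * τ) * ⟪w, Fn (γ τ)⟫ = g 0 - g T := by
    rw [intervalIntegral.integral_neg] at hint
    linarith
  have hg0 : g 0 = h (γ 0) := by simp [hg]
  rw [hint', hg0]
  have : h (γ 0) - (h (γ 0) - g T) = g T := by ring
  rw [this, hg]
  have hle : Real.exp (-lam * T) ≤ 1 := by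
    apply Real.exp_le_one_iff.mpr
    nlinarith
  rw [abs_mul, abs_of_pos (Real.exp_pos _)]
  nlinarith [abs_nonneg (h (γ T)), Real.exp_pos (-lam * T)]
end

section
/- Let f : ℝⁿ → ℝⁿ, let A be a real n×n matrix, set F_n(x) := f(x) − A x, let λ > 0 be a real number and w ∈ ℝⁿ. Suppose h : ℝⁿ → ℝ is differentiable and satisfies ⟨∇h(x), f(x)⟩ − λ h(x) + ⟨w, F_n(x)⟩ = 0 for all x. Let ε > 0 and δ ≥ 0 be such that |h(y)| ≤ δ for every y with ‖y‖ ≤ ε. If γ : ℝ → ℝⁿ is a differentiable solution curve γ′(τ) = f(γ(τ)) with γ(0) = x, τ ↦ ⟨w, F_n(γ(τ))⟩ is continuous, and there exists a time t(x) ≥ 0 with ‖γ(t(x))‖ ≤ ε, then |h(x) − ∫₀^{t(x)} e^{−λ τ} ⟨w, F_n(γ(τ))⟩ dτ| ≤ δ. -/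
open scoped RealInnerProductSpace

/-- If `|h| ≤ δ` on the `ε`-ball around the origin and the trajectory from `x`
reaches that ball at time `t(x) ≥ 0`, then the truncated path-integral approximates `h(x)`
with error at most `δ`. -/
theorem stmt3 {n : ℕ}
    (f : EuclideanSpace ℝ (Fin n) → EuclideanSpace ℝ (Fin n))
    (A : Matrix (Fin n) (Fin n) ℝ)
    (Fn : EuclideanSpace ℝ (Fin n) → EuclideanSpace ℝ (Fin n))
    (hFn : ∀ x, Fn x = f x - Matrix.toEuclideanLin A x)
    (lam : ℝ) (hlam : 0 < lam) (w : EuclideanSpace ℝ (Fin n))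
    (h : EuclideanSpace ℝ (Fin n) → ℝ)
    (hdiff : Differentiable ℝ h)
    (hpde : ∀ x, ⟪gradient h x, f x⟫ - lam * h x + ⟪w, Fn x⟫ = 0)
    (ε δ : ℝ) (hε : 0 < ε) (hδ : 0 ≤ δ)
    (hsmall : ∀ y : EuclideanSpace ℝ (Fin n), ‖y‖ ≤ ε → |h y| ≤ δ)
    (x : EuclideanSpace ℝ (Fin n))
    (γ : ℝ → EuclideanSpace ℝ (Fin n))
    (hγ : ∀ τ, HasDerivAt γ (f (γ τ)) τ)
    (hγ0 : γ 0 = x)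
    (hcont : Continuous fun τ => (⟪w, Fn (γ τ)⟫ : ℝ))
    (tx : ℝ) (htx : 0 ≤ tx) (hreach : ‖γ tx‖ ≤ ε) :
    |h x - ∫ τ in (0 : ℝ)..tx, Real.exp (-lam * τ) * ⟪w, Fn (γ τ)⟫| ≤ δ := by
  set g : ℝ → ℝ := fun τ => Real.exp (-lam * τ) * h (γ τ) with hg
  have hgder : ∀ τ : ℝ, HasDerivAt g (-(Real.exp (-lam * τ) * ⟪w, Fn (γ τ)⟫)) τ := by
    intro τ
    have hexp : HasDerivAt (fun τ : ℝ => Real.exp (-lam * τ))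
        (-lam * Real.exp (-lam * τ)) τ := by
      have := (((hasDerivAt_id τ).const_mul (-lam))).exp
      simpa [mul_comm] using this
    have hcomp : HasDerivAt (fun τ => h (γ τ)) (⟪gradient h (γ τ), f (γ τ)⟫) τ := by
      have : HasDerivAt (fun τ => h (γ τ)) _ τ := ((hdiff (γ τ)).hasGradientAt.hasFDerivAt).comp_hasDerivAt τ (hγ τ)
      simpa [InnerProductSpace.toDual_apply_apply] using this
    have : HasDerivAt g _ τ := hexp.mul hcomp
    convert this using 1
    have hp := hpde (γ τ)
    have h2 : (⟪gradient h (γ τ), f (γ τ)⟫ : ℝ) = lam * h (γ τ) - ⟪w, Fn (γ τ)⟫ := by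
      linarith
    rw [h2]; ring
  have hint : IntervalIntegrable (fun τ => -(Real.exp (-lam * τ) * ⟪w, Fn (γ τ)⟫))
      MeasureTheory.volume 0 tx := by
    exact (((Real.continuous_exp.comp (continuous_const.mul continuous_id)).mul hcont).neg).intervalIntegrable 0 tx
  have hFTC := intervalIntegral.integral_eq_sub_of_hasDerivAt
    (fun τ _ => hgder τ) hint
  have hI : ∫ τ in (0:ℝ)..tx, Real.exp (-lam * τ) * ⟪w, Fn (γ τ)⟫ = g 0 - g tx := by
    rw [intervalIntegral.integral_neg] at hFTC
    linarith
  have hg0 : g 0 = h x := by simp [hg, hγ0]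
  rw [hI, hg0]
  have : |h x - (h x - g tx)| = |g tx| := by ring_nf
  rw [this]
  have hexple : Real.exp (-lam * tx) ≤ 1 := by
    apply Real.exp_le_one_iff.mpr
    nlinarith
  calc |g tx| = Real.exp (-lam * tx) * |h (γ tx)| := by
        rw [abs_mul, abs_of_pos (Real.exp_pos _)]
    _ ≤ 1 * δ := by
        apply mul_le_mul hexple (hsmall _ hreach) (abs_nonneg _) zero_le_one
    _ = δ := one_mul δ
end

section
/- Let f : ℝⁿ → ℝⁿ be differentiable at 0 with f(0) = 0 and Fréchet derivative A := Df(0), let λ ∈ ℝ, w ∈ ℝⁿ, and let h : ℝⁿ → ℝ be differentiable with h(0) = 0, ∇h(0) = 0, and x ↦ ∇h(x) continuous at 0. If φ(x) := ⟨w, x⟩ + h(x) satisfies ⟨∇φ(x), f(x)⟩ = λ φ(x) for all x in a neighborhood of 0, then w is a left eigenvector of A with eigenvalue λ, i.e., Aᵀ w = λ w. -/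
open scoped RealInnerProductSpace Topology

/-- If `φ(x) = ⟨w,x⟩ + h(x)` is a Koopman generator eigenfunction near the
hyperbolic equilibrium `0` of `ẋ = f(x)` (with `h` vanishing to first order at `0`), then `w`
is a left eigenvector of `A = Df(0)`, i.e. `⟨w, A v⟩ = λ ⟨w, v⟩` for all `v`. -/
theorem stmt5 {n : ℕ}
    (f : EuclideanSpace ℝ (Fin n) → EuclideanSpace ℝ (Fin n))
    (hf0 : f 0 = 0) (hfd : DifferentiableAt ℝ f 0)
    (lam : ℝ) (w : EuclideanSpace ℝ (Fin n))
    (h : EuclideanSpace ℝ (Fin n) → ℝ)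
    (hdiff : Differentiable ℝ h)
    (h0 : h 0 = 0) (hgrad0 : gradient h 0 = 0)
    (hgradcont : ContinuousAt (gradient h) 0)
    (φ : EuclideanSpace ℝ (Fin n) → ℝ)
    (hφ : ∀ x, φ x = ⟪w, x⟫ + h x)
    (heig : ∀ᶠ x in 𝓝 (0 : EuclideanSpace ℝ (Fin n)), ⟪gradient φ x, f x⟫ = lam * φ x) :
    ∀ v : EuclideanSpace ℝ (Fin n), ⟪w, fderiv ℝ f 0 v⟫ = lam * ⟪w, v⟫ := by
  intro v
  have hφfun : φ = fun x => ⟪w, x⟫ + h x := funext hφ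
  have hinnerF : ∀ x : EuclideanSpace ℝ (Fin n),
      HasFDerivAt (fun y : EuclideanSpace ℝ (Fin n) => ⟪w, y⟫)
      (InnerProductSpace.toDual ℝ _ w : EuclideanSpace ℝ (Fin n) →L[ℝ] ℝ) x := by
    intro x
    have := (InnerProductSpace.toDual ℝ (EuclideanSpace ℝ (Fin n)) w).hasFDerivAt (x := x)
    refine this.congr_of_eventuallyEq (Filter.Eventually.of_forall fun y => ?_)
    simp [InnerProductSpace.toDual_apply_apply]
  have hφgrad : ∀ x : EuclideanSpace ℝ (Fin n), gradient φ x = w + gradient h x := by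
    intro x
    have h2 : HasFDerivAt h (InnerProductSpace.toDual ℝ _ (gradient h x)) x :=
      (hdiff x).hasGradientAt.hasFDerivAt
    have h3 : HasFDerivAt φ (InnerProductSpace.toDual ℝ _ (w + gradient h x)) x := by
      rw [hφfun, map_add]
      exact (hinnerF x).add h2
    exact (hasFDerivAt_iff_hasGradientAt.mp h3).gradient.trans (by rw [LinearIsometryEquiv.symm_apply_apply])
  have hfA : HasFDerivAt f (fderiv ℝ f 0) 0 := hfd.hasFDerivAt
  -- term 1 : ⟪w, f x⟫
  have hT1 : HasFDerivAt (fun x : EuclideanSpace ℝ (Fin n) => ⟪w, f x⟫)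
      ((InnerProductSpace.toDual ℝ _ w : EuclideanSpace ℝ (Fin n) →L[ℝ] ℝ).comp
        (fderiv ℝ f 0)) 0 := by
    have := ((InnerProductSpace.toDual ℝ (EuclideanSpace ℝ (Fin n)) w).hasFDerivAt
      (x := f 0)).comp 0 hfA
    refine this.congr_of_eventuallyEq (Filter.Eventually.of_forall fun y => ?_)
    simp [InnerProductSpace.toDual_apply_apply]
  -- term 2 : ⟪gradient h x, f x⟫ has derivative 0 at 0
  have hT2 : HasFDerivAt (fun x : EuclideanSpace ℝ (Fin n) => ⟪gradient h x, f x⟫)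
      (0 : EuclideanSpace ℝ (Fin n) →L[ℝ] ℝ) 0 := by
    rw [hasFDerivAt_iff_isLittleO_nhds_zero]
    simp only [zero_add, hf0, hgrad0, inner_zero_left, sub_zero,
      ContinuousLinearMap.zero_apply]
    have hbig : (fun x : EuclideanSpace ℝ (Fin n) => f x) =O[𝓝 0] fun x => x := by
      have := hfA.isBigO_sub
      simpa [hf0] using this
    have hsmall : (fun x : EuclideanSpace ℝ (Fin n) => gradient h x)
        =o[𝓝 0] (fun _ => (1 : ℝ)) := by
      rw [Asymptotics.isLittleO_one_iff]
      have := hgradcont.tendsto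
      rwa [hgrad0] at this
    have hmul : (fun x : EuclideanSpace ℝ (Fin n) => ‖gradient h x‖ * ‖f x‖) =o[𝓝 0]
        fun x : EuclideanSpace ℝ (Fin n) => (1 : ℝ) * ‖x‖ :=
      hsmall.norm_left.mul_isBigO hbig.norm_norm
    have hb : (fun x : EuclideanSpace ℝ (Fin n) => ⟪gradient h x, f x⟫) =O[𝓝 0]
        fun x : EuclideanSpace ℝ (Fin n) => ‖gradient h x‖ * ‖f x‖ := by
      refine Asymptotics.isBigO_of_le _ fun x => ?_
      simpa [abs_of_nonneg (mul_nonneg (norm_nonneg _) (norm_nonneg _))] using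
        norm_inner_le_norm (𝕜 := ℝ) (gradient h x) (f x)
    have hlo := hb.trans_isLittleO hmul
    simp only [one_mul] at hlo
    exact Asymptotics.isLittleO_norm_right.mp hlo
  -- term 3 : lam * φ x
  have hgh0 : HasFDerivAt h (0 : EuclideanSpace ℝ (Fin n) →L[ℝ] ℝ) 0 := by
    have hg := (hdiff 0).hasGradientAt
    rw [hgrad0] at hg
    simpa [map_zero] using hg.hasFDerivAt
  have hT3 : HasFDerivAt (fun x : EuclideanSpace ℝ (Fin n) => lam * φ x)
      (lam • (InnerProductSpace.toDual ℝ _ w : EuclideanSpace ℝ (Fin n) →L[ℝ] ℝ)) 0 := by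
    rw [hφfun]
    have := ((hinnerF 0).add hgh0).const_mul lam
    simpa using this
  -- combine
  have hg : HasFDerivAt (fun x : EuclideanSpace ℝ (Fin n) => ⟪gradient φ x, f x⟫ - lam * φ x)
      ((InnerProductSpace.toDual ℝ _ w : EuclideanSpace ℝ (Fin n) →L[ℝ] ℝ).comp (fderiv ℝ f 0)
        + 0 - lam • (InnerProductSpace.toDual ℝ _ w : EuclideanSpace ℝ (Fin n) →L[ℝ] ℝ)) 0 := by
    have h12 : HasFDerivAt (fun x : EuclideanSpace ℝ (Fin n) => ⟪gradient φ x, f x⟫)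
        ((InnerProductSpace.toDual ℝ _ w : EuclideanSpace ℝ (Fin n) →L[ℝ] ℝ).comp (fderiv ℝ f 0)
          + 0) 0 := by
      refine (hT1.add hT2).congr_of_eventuallyEq (Filter.Eventually.of_forall fun x => ?_)
      simp only [hφgrad x, inner_add_left, Pi.add_apply]
    exact h12.sub hT3
  have hzero : (fun x : EuclideanSpace ℝ (Fin n) => ⟪gradient φ x, f x⟫ - lam * φ x)
      =ᶠ[𝓝 0] fun _ => (0 : ℝ) :=
    heig.mono fun x hx => by simp only [hx, sub_self]
  have hg0 : HasFDerivAt (fun _ : EuclideanSpace ℝ (Fin n) => (0 : ℝ))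
      ((InnerProductSpace.toDual ℝ _ w : EuclideanSpace ℝ (Fin n) →L[ℝ] ℝ).comp (fderiv ℝ f 0)
        + 0 - lam • (InnerProductSpace.toDual ℝ _ w : EuclideanSpace ℝ (Fin n) →L[ℝ] ℝ)) 0 :=
    hg.congr_of_eventuallyEq hzero.symm
  have hL := hg0.unique (hasFDerivAt_const (0 : ℝ) (0 : EuclideanSpace ℝ (Fin n)))
  have hv := congrFun (congrArg DFunLike.coe hL) v
  simp only [ContinuousLinearMap.sub_apply, ContinuousLinearMap.add_apply,
    ContinuousLinearMap.comp_apply, ContinuousLinearMap.zero_apply,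
    ContinuousLinearMap.smul_apply, InnerProductSpace.toDual_apply_apply, add_zero,
    smul_eq_mul, sub_eq_zero] at hv
  exact hv
end

section
/- Let f : ℝⁿ → ℝⁿ, λ ∈ ℝ, and let φ : ℝⁿ → ℝ be differentiable with ⟨∇φ(x), f(x)⟩ = λ φ(x) for all x. Then the zero level set Z := {x ∈ ℝⁿ : φ(x) = 0} is invariant under the dynamics: for every differentiable solution curve γ : ℝ → ℝⁿ with γ′(t) = f(γ(t)) for all t and γ(0) ∈ Z, one has γ(t) ∈ Z for all t ∈ ℝ. -/
open scoped RealInnerProductSpace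

/-- The zero level set of a Koopman generator eigenfunction is invariant under
the dynamics: solution curves starting on `{φ = 0}` remain on it for all time. -/
theorem stmt8 {n : ℕ}
    (f : EuclideanSpace ℝ (Fin n) → EuclideanSpace ℝ (Fin n))
    (lam : ℝ)
    (φ : EuclideanSpace ℝ (Fin n) → ℝ)
    (hdiff : Differentiable ℝ φ)
    (heig : ∀ x, ⟪gradient φ x, f x⟫ = lam * φ x) :
    ∀ γ : ℝ → EuclideanSpace ℝ (Fin n),
      (∀ t, HasDerivAt γ (f (γ t)) t) →
      γ 0 ∈ {x : EuclideanSpace ℝ (Fin n) | φ x = 0} →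
      ∀ t : ℝ, γ t ∈ {x : EuclideanSpace ℝ (Fin n) | φ x = 0} := by
  intro γ hγ h0 t
  set ψ : ℝ → ℝ := fun t => φ (γ t) with hψ
  have hψd : ∀ s, HasDerivAt ψ (lam * ψ s) s := by
    intro s
    have hg : HasGradientAt φ (gradient φ (γ s)) (γ s) :=
      (hdiff (γ s)).hasGradientAt
    have hF : HasFDerivAt φ (InnerProductSpace.toDual ℝ _ (gradient φ (γ s))) (γ s) :=
      hg.hasFDerivAt
    have := hF.comp_hasDerivAt s (hγ s)
    rw [InnerProductSpace.toDual_apply_apply, heig (γ s)] at this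
    exact this
  have key : ∀ s, ψ s * Real.exp (-lam * s) = 0 := by
    have hc : ∀ s, HasDerivAt (fun u => ψ u * Real.exp (-lam * u)) 0 s := by
      intro s
      have h1 : HasDerivAt (fun u => Real.exp (-lam * u)) (-lam * Real.exp (-lam * s)) s := by
        have h0 := (Real.hasDerivAt_exp (-lam * s)).comp s ((hasDerivAt_id s).const_mul (-lam))
        have : HasDerivAt (fun u => Real.exp (-lam * u)) (Real.exp (-lam * s) * (-lam * 1)) s := h0
        simpa [mul_comm] using this
      have : HasDerivAt (fun u => ψ u * Real.exp (-lam * u)) _ s := (hψd s).mul h1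
      convert this using 1
      ring
    have hconst : ∀ s, (fun u => ψ u * Real.exp (-lam * u)) s
        = (fun u => ψ u * Real.exp (-lam * u)) 0 := by
      intro s
      exact is_const_of_deriv_eq_zero (fun u => (hc u).differentiableAt)
        (fun u => (hc u).deriv) s 0
    intro s
    have : ψ 0 = 0 := h0
    simpa [this] using hconst s
  have := key t
  have hexp : Real.exp (-lam * t) ≠ 0 := Real.exp_ne_zero _
  have : ψ t = 0 := by
    rcases mul_eq_zero.mp this with h | h
    · exact h
    · exact absurd h hexp
  exact this
end

section
/- Let f : ℝⁿ → ℝⁿ, let λ > 0 be a real number, and let φ : ℝⁿ → ℝ be continuous, differentiable, and satisfy ⟨∇φ(x), f(x)⟩ = λ φ(x) for all x. Let γ : ℝ → ℝⁿ be a differentiable solution curve with γ′(t) = f(γ(t)) for all t and γ(0) = x. If γ(t) converges to some point x* ∈ ℝⁿ as t → ∞ (in particular if x lies in the stable manifold of an equilibrium), then φ(x) = 0. -/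
open scoped RealInnerProductSpace Topology
open Filter

/-- For a Koopman generator eigenfunction `φ` with positive eigenvalue `λ > 0`,
any initial condition whose forward trajectory converges (e.g. a point of the stable manifold
of an equilibrium) lies in the zero level set of `φ`. -/
theorem stmt9 {n : ℕ}
    (f : EuclideanSpace ℝ (Fin n) → EuclideanSpace ℝ (Fin n))
    (lam : ℝ) (hlam : 0 < lam)
    (φ : EuclideanSpace ℝ (Fin n) → ℝ)
    (hcont : Continuous φ)
    (hdiff : Differentiable ℝ φ)
    (heig : ∀ x, ⟪gradient φ x, f x⟫ = lam * φ x)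
    (γ : ℝ → EuclideanSpace ℝ (Fin n))
    (hγ : ∀ t, HasDerivAt γ (f (γ t)) t)
    (x : EuclideanSpace ℝ (Fin n)) (hγ0 : γ 0 = x)
    (xstar : EuclideanSpace ℝ (Fin n))
    (hconv : Tendsto γ atTop (𝓝 xstar)) :
    φ x = 0 := by
  -- g t = φ (γ t) satisfies g' = lam * g
  have hg : ∀ t, HasDerivAt (fun t => φ (γ t)) (lam * φ (γ t)) t := by
    intro t
    have h1 : HasGradientAt φ (gradient φ (γ t)) (γ t) :=
      (hdiff (γ t)).hasGradientAt
    have h2 := h1.hasFDerivAt.comp_hasDerivAt t (hγ t)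
    have he := heig (γ t)
    rw [gradient, InnerProductSpace.toDual_symm_apply] at he
    simp [he] at h2
    exact h2
  -- h t = φ (γ t) * exp (-(lam * t)) has zero derivative
  set h : ℝ → ℝ := fun t => φ (γ t) * Real.exp (-(lam * t)) with hh
  have hderiv : ∀ t, HasDerivAt h 0 t := by
    intro t
    have he : HasDerivAt (fun t : ℝ => Real.exp (-(lam * t)))
        (Real.exp (-(lam * t)) * (-lam)) t := by
      have : HasDerivAt (fun t : ℝ => -(lam * t)) (-lam) t := by
        have h3 := ((hasDerivAt_id t).const_mul lam).neg
        simp only [mul_one] at h3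
        exact h3
      simpa using this.exp
    have := (hg t).mul he
    have hz : lam * φ (γ t) * Real.exp (-(lam * t)) + φ (γ t) * (Real.exp (-(lam * t)) * -lam) = 0 := by
      ring
    rw [hz] at this
    exact this
  have hconst : ∀ t, h t = h 0 := by
    intro t
    have : ∀ s, deriv h s = 0 := fun s => (hderiv s).deriv
    have hd : Differentiable ℝ h := fun s => (hderiv s).differentiableAt
    exact is_const_of_deriv_eq_zero hd this t 0
  have h0 : h 0 = φ x := by simp [hh, hγ0]
  -- h t → φ xstar * 0 = 0
  have hlim : Tendsto h atTop (𝓝 (φ xstar * 0)) := by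
    apply Tendsto.mul (hcont.continuousAt.tendsto.comp hconv)
    have : Tendsto (fun t : ℝ => -(lam * t)) atTop atBot := by
      apply tendsto_neg_atBot_iff.mpr
      exact (tendsto_const_mul_atTop_of_pos hlam).mpr tendsto_id
    exact Real.tendsto_exp_atBot.comp this
  have hlim' : Tendsto h atTop (𝓝 (φ x)) := by
    have he : h = fun _ => φ x := funext fun t => (hconst t).trans h0
    rw [he]
    exact tendsto_const_nhds
  have := tendsto_nhds_unique hlim' hlim
  simpa using this
end

section
/- Let μ be a probability measure on ℝⁿ and let Ψ = (ψ_1, …, ψ_N) : ℝⁿ → ℝᴺ be measurable and satisfy the μ-independence property: for every nonzero c ∈ ℝᴺ, μ{x ∈ ℝⁿ : ⟨c, Ψ(x)⟩ = 0} = 0. Let X_1, …, X_N be independent random vectors each with law μ. Then almost surely the vectors Ψ(X_1), …, Ψ(X_N) ∈ ℝᴺ are linearly independent; equivalently, the N×N matrix G with rows Ψ(X_k)ᵀ is almost surely invertible. -/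
open MeasureTheory ProbabilityTheory
open scoped RealInnerProductSpace

lemma stmt14_measSet {n N : ℕ} (Ψ : EuclideanSpace ℝ (Fin n) → EuclideanSpace ℝ (Fin N))
    (hΨ : Measurable Ψ) (k : ℕ) :
    MeasurableSet {x : Fin k → EuclideanSpace ℝ (Fin n) |
      ¬ LinearIndependent ℝ (fun i : Fin k => Ψ (x i))} := by
  have h1 : Measurable (fun x : Fin k → EuclideanSpace ℝ (Fin n) =>
      fun i : Fin k => Ψ (x i)) :=
    measurable_pi_lambda _ fun i => hΨ.comp (measurable_pi_apply i)
  have h2 : MeasurableSet {v : Fin k → EuclideanSpace ℝ (Fin N) | LinearIndependent ℝ v} :=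
    isOpen_setOf_linearIndependent.measurableSet
  exact h2.compl.preimage h1

lemma stmt14_pi {n N : ℕ} (μ : Measure (EuclideanSpace ℝ (Fin n))) [IsProbabilityMeasure μ]
    (Ψ : EuclideanSpace ℝ (Fin n) → EuclideanSpace ℝ (Fin N))
    (hΨ : Measurable Ψ)
    (hind : ∀ c : EuclideanSpace ℝ (Fin N), c ≠ 0 →
      μ {x : EuclideanSpace ℝ (Fin n) | ⟪c, Ψ x⟫ = 0} = 0) :
    ∀ k : ℕ, k ≤ N →
      (Measure.pi fun _ : Fin k => μ)
        {x | ¬ LinearIndependent ℝ (fun i : Fin k => Ψ (x i))} = 0 := by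
  intro k
  induction k with
  | zero =>
    intro _
    have : {x : Fin 0 → EuclideanSpace ℝ (Fin n) |
        ¬ LinearIndependent ℝ (fun i : Fin 0 => Ψ (x i))} = ∅ := by
      ext x
      simp [linearIndependent_empty_type]
    rw [this, measure_empty]
  | succ k ih =>
    intro hk
    have hk' : k < N := hk
    have ihk := ih hk'.le
    set S : Set (Fin (k + 1) → EuclideanSpace ℝ (Fin n)) :=
      {x | ¬ LinearIndependent ℝ (fun i : Fin (k + 1) => Ψ (x i))} with hSdef
    have hS : MeasurableSet S := stmt14_measSet Ψ hΨ (k + 1)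
    set e := MeasurableEquiv.piFinSuccAbove (fun _ : Fin (k + 1) => EuclideanSpace ℝ (Fin n)) (Fin.last k) with he
    have hmp : MeasurePreserving e (Measure.pi fun _ : Fin (k + 1) => μ)
        (μ.prod (Measure.pi fun _ : Fin k => μ)) :=
      measurePreserving_piFinSuccAbove (fun _ : Fin (k + 1) => μ) (Fin.last k)
    have hmps := hmp.symm e
    have h1 : (Measure.pi fun _ : Fin (k + 1) => μ) S
        = (μ.prod (Measure.pi fun _ : Fin k => μ)) (e.symm ⁻¹' S) :=
      (hmps.measure_preimage hS.nullMeasurableSet).symm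
    rw [h1]
    -- swap the product
    have hsw : Measure.map Prod.swap ((Measure.pi fun _ : Fin k => μ).prod μ)
        = μ.prod (Measure.pi fun _ : Fin k => μ) := Measure.prod_swap
    have hSsymm : MeasurableSet (e.symm ⁻¹' S) := e.symm.measurable hS
    rw [← hsw, Measure.map_apply measurable_swap hSsymm]
    rw [Measure.measure_prod_null (measurable_swap hSsymm)]
    -- a.e. slice has measure zero
    have hae : ∀ᵐ x ∂(Measure.pi fun _ : Fin k => μ),
        LinearIndependent ℝ (fun i : Fin k => Ψ (x i)) := by
      rw [MeasureTheory.ae_iff]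
      simpa using ihk
    filter_upwards [hae] with x hx
    -- the slice
    have hslice : Prod.mk x ⁻¹' (Prod.swap ⁻¹' (e.symm ⁻¹' S))
        = {y : EuclideanSpace ℝ (Fin n) | ¬ LinearIndependent ℝ
            (fun i : Fin (k + 1) => Ψ (Fin.snoc (α := fun _ => EuclideanSpace ℝ (Fin n)) (fun j : Fin k => x j) y i))} := by
      ext y
      simp only [Set.mem_preimage, Set.mem_setOf_eq, Prod.swap_prod_mk, hSdef]
      have : e.symm (y, x) = Fin.snoc (α := fun _ => EuclideanSpace ℝ (Fin n)) (fun j : Fin k => x j) y := by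
        show (Fin.insertNthEquiv (fun _ : Fin (k + 1) => EuclideanSpace ℝ (Fin n)) (Fin.last k)) (y, x)
            = Fin.snoc (α := fun _ => EuclideanSpace ℝ (Fin n)) (fun j : Fin k => x j) y
        simp [Fin.insertNthEquiv, Fin.insertNth_last']
      rw [this]
    rw [hslice]
    -- span of the first k vectors is proper
    have hspan : Submodule.span ℝ (Set.range fun i : Fin k => Ψ (x i)) ≠ ⊤ := by
      intro htop
      have b : Module.Basis (Fin k) ℝ (EuclideanSpace ℝ (Fin N)) :=
        Module.Basis.mk hx (by rw [htop])
      have hcard : Module.finrank ℝ (EuclideanSpace ℝ (Fin N)) = k := by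
        rw [Module.finrank_eq_card_basis b, Fintype.card_fin]
      rw [finrank_euclideanSpace_fin] at hcard
      omega
    have hbot : (Submodule.span ℝ (Set.range fun i : Fin k => Ψ (x i)))ᗮ ≠ ⊥ := by
      exact fun h => hspan (Submodule.orthogonal_eq_bot_iff.mp h)
    obtain ⟨c, hc_mem, hc0⟩ := Submodule.exists_mem_ne_zero_of_ne_bot hbot
    refine measure_mono_null ?_ (hind c hc0)
    intro y hy
    simp only [Set.mem_setOf_eq] at hy ⊢
    have hsnoc : (fun i : Fin (k + 1) => Ψ (Fin.snoc (α := fun _ => EuclideanSpace ℝ (Fin n)) (fun j : Fin k => x j) y i))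
        = Fin.snoc (fun j : Fin k => Ψ (x j)) (Ψ y) := by
      funext i
      refine Fin.lastCases ?_ (fun j => ?_) i
      · simp
      · simp
    rw [hsnoc, linearIndependent_fin_snoc] at hy
    push_neg at hy
    have hmem : Ψ y ∈ Submodule.span ℝ (Set.range fun i : Fin k => Ψ (x i)) := hy hx
    have := (Submodule.mem_orthogonal _ c).mp hc_mem (Ψ y) hmem
    rw [real_inner_comm] at this
    exact this

/-- If `Ψ` satisfies the μ-independence property and `X₁, …, X_N` are
independent random vectors with common law `μ`, then almost surely the vectors
`Ψ(X₁), …, Ψ(X_N)` are linearly independent, equivalently the data matrix `G` with rows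
`Ψ(X_k)ᵀ` is almost surely invertible. -/
theorem stmt14 {n N : ℕ} {Ω : Type*} [MeasurableSpace Ω]
    (P : Measure Ω) [IsProbabilityMeasure P]
    (μ : Measure (EuclideanSpace ℝ (Fin n))) [IsProbabilityMeasure μ]
    (Ψ : EuclideanSpace ℝ (Fin n) → EuclideanSpace ℝ (Fin N))
    (hΨ : Measurable Ψ)
    (hind : ∀ c : EuclideanSpace ℝ (Fin N), c ≠ 0 →
      μ {x : EuclideanSpace ℝ (Fin n) | ⟪c, Ψ x⟫ = 0} = 0)
    (X : Fin N → Ω → EuclideanSpace ℝ (Fin n))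
    (hXmeas : ∀ k, Measurable (X k))
    (hXindep : iIndepFun X P)
    (hXlaw : ∀ k, P.map (X k) = μ) :
    ∀ᵐ ω ∂P,
      LinearIndependent ℝ (fun k : Fin N => Ψ (X k ω)) ∧
      IsUnit (Matrix.of fun k i : Fin N => Ψ (X k ω) i).det := by
  have hmeas : Measurable (fun ω => fun k : Fin N => X k ω) :=
    measurable_pi_lambda _ hXmeas
  have hmap : P.map (fun ω => fun k : Fin N => X k ω)
      = Measure.pi (fun _ : Fin N => μ) := by
    refine (Measure.pi_eq fun s hs => ?_).symm
    rw [Measure.map_apply hmeas (MeasurableSet.univ_pi hs)]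
    have hpre : (fun ω => fun k : Fin N => X k ω) ⁻¹' Set.pi Set.univ s
        = ⋂ k, X k ⁻¹' s k := by
      ext ω; simp [Set.mem_pi]
    rw [hpre, hXindep.meas_iInter fun k => ⟨s k, hs k, rfl⟩]
    exact Finset.prod_congr rfl fun k _ => by
      rw [← hXlaw k, Measure.map_apply (hXmeas k) (hs k)]
  have hS := stmt14_measSet Ψ hΨ N
  have h0 : P ((fun ω => fun k : Fin N => X k ω) ⁻¹'
      {x : Fin N → EuclideanSpace ℝ (Fin n) |
        ¬ LinearIndependent ℝ (fun i : Fin N => Ψ (x i))}) = 0 := by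
    rw [← Measure.map_apply hmeas hS, hmap]
    exact stmt14_pi μ Ψ hΨ hind N le_rfl
  have hae := measure_eq_zero_iff_ae_notMem.mp h0
  filter_upwards [hae] with ω hω
  simp only [Set.mem_preimage, Set.mem_setOf_eq, not_not] at hω
  refine ⟨hω, ?_⟩
  rw [← Matrix.isUnit_iff_isUnit_det]
  rw [← Matrix.linearIndependent_rows_iff_isUnit]
  exact hω.map' (WithLp.linearEquiv 2 ℝ (Fin N → ℝ)).toLinearMap
    (WithLp.linearEquiv 2 ℝ (Fin N → ℝ)).ker
end

section
/- Let f : ℝⁿ → ℝⁿ, let A be a real n×n matrix, set F_n(x) := f(x) − A x, let λ > 0 be a real number and w ∈ ℝⁿ. Let h : ℝⁿ → ℝ be differentiable satisfying ⟨∇h(x), f(x)⟩ − λ h(x) + ⟨w, F_n(x)⟩ = 0 for all x, and define the eigenfunction φ_λ(x) := ⟨w, x⟩ + h(x) and its path-integral approximation φ̂_λ(x) := ⟨w, x⟩ + ∫₀^{t(x)} e^{−λ τ} ⟨w, F_n(γ(τ))⟩ dτ, where γ is a differentiable solution curve with γ′ = f∘γ, γ(0) = x, τ ↦ ⟨w,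 F_n(γ(τ))⟩ continuous, and t(x) ≥ 0 satisfies ‖γ(t(x))‖ ≤ ε. If δ ≥ 0 is such that |h(y)| ≤ δ for all ‖y‖ ≤ ε, then |φ_λ(x) − φ̂_λ(x)| ≤ δ. -/
open scoped RealInnerProductSpace

/-- For the principal eigenfunction `φ_λ(x) = ⟨w,x⟩ + h(x)` and its
path-integral approximation `φ̂_λ(x) = ⟨w,x⟩ + ∫₀^{t(x)} e^{−λτ}⟨w, Fₙ(γ(τ))⟩dτ`, if
`|h| ≤ δ` on the `ε`-ball and the trajectory from `x` reaches that ball at time `t(x) ≥ 0`,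
then `|φ_λ(x) − φ̂_λ(x)| ≤ δ`. -/
theorem stmt16 {n : ℕ}
    (f : EuclideanSpace ℝ (Fin n) → EuclideanSpace ℝ (Fin n))
    (A : Matrix (Fin n) (Fin n) ℝ)
    (Fn : EuclideanSpace ℝ (Fin n) → EuclideanSpace ℝ (Fin n))
    (hFn : ∀ x, Fn x = f x - Matrix.toEuclideanLin A x)
    (lam : ℝ) (hlam : 0 < lam) (w : EuclideanSpace ℝ (Fin n))
    (h : EuclideanSpace ℝ (Fin n) → ℝ)
    (hdiff : Differentiable ℝ h)
    (hpde : ∀ x, ⟪gradient h x, f x⟫ - lam * h x + ⟪w, Fn x⟫ = 0)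
    (φlam : EuclideanSpace ℝ (Fin n) → ℝ)
    (hφlam : ∀ x, φlam x = ⟪w, x⟫ + h x)
    (x : EuclideanSpace ℝ (Fin n))
    (γ : ℝ → EuclideanSpace ℝ (Fin n))
    (hγ : ∀ τ, HasDerivAt γ (f (γ τ)) τ)
    (hγ0 : γ 0 = x)
    (hcont : Continuous fun τ => (⟪w, Fn (γ τ)⟫ : ℝ))
    (tx : ℝ) (htx : 0 ≤ tx)
    (ε δ : ℝ) (hε : 0 < ε) (hδ : 0 ≤ δ)
    (hreach : ‖γ tx‖ ≤ ε)
    (hsmall : ∀ y : EuclideanSpace ℝ (Fin n), ‖y‖ ≤ ε → |h y| ≤ δ)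
    (φhat : ℝ)
    (hφhat : φhat = ⟪w, x⟫ + ∫ τ in (0 : ℝ)..tx, Real.exp (-lam * τ) * ⟪w, Fn (γ τ)⟫) :
    |φlam x - φhat| ≤ δ := by
  -- derivative of g τ = e^{-λτ} h(γ τ)
  set g : ℝ → ℝ := fun τ => Real.exp (-lam * τ) * h (γ τ) with hg
  have hgderiv : ∀ τ, HasDerivAt g (-(Real.exp (-lam * τ) * ⟪w, Fn (γ τ)⟫)) τ := by
    intro τ
    have hexp : HasDerivAt (fun τ : ℝ => Real.exp (-lam * τ))
        (-lam * Real.exp (-lam * τ)) τ := by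
      have := ((hasDerivAt_id τ).const_mul (-lam)).exp
      simpa [mul_comm] using this
    have hhγ : HasDerivAt (fun τ => h (γ τ)) (⟪gradient h (γ τ), f (γ τ)⟫) τ := by
      have hf : HasFDerivAt h (InnerProductSpace.toDual ℝ _ (gradient h (γ τ))) (γ τ) :=
        (hdiff (γ τ)).hasGradientAt.hasFDerivAt
      have hc := hf.comp_hasDerivAt τ (hγ τ)
      rw [InnerProductSpace.toDual_apply_apply] at hc
      exact hc
    have := hexp.mul hhγ
    refine this.congr_deriv ?_
    have hp := hpde (γ τ)
    have : (⟪gradient h (γ τ), f (γ τ)⟫ : ℝ) = lam * h (γ τ) - ⟪w, Fn (γ τ)⟫ := by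
      linarith
    rw [this]; ring
  have hint : (∫ τ in (0:ℝ)..tx, Real.exp (-lam * τ) * ⟪w, Fn (γ τ)⟫) = g 0 - g tx := by
    have := intervalIntegral.integral_eq_sub_of_hasDerivAt
      (f := g) (f' := fun τ => -(Real.exp (-lam * τ) * ⟪w, Fn (γ τ)⟫))
      (fun τ _ => hgderiv τ)
      (((Real.continuous_exp.comp (continuous_const.mul continuous_id)).mul hcont).neg.intervalIntegrable 0 tx)
    rw [intervalIntegral.integral_neg] at this
    linarith
  have hkey : φlam x - φhat = g tx := by
    rw [hφlam, hφhat, hint, hg]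
    simp [hγ0]
  rw [hkey]
  have h1 : |g tx| = Real.exp (-lam * tx) * |h (γ tx)| := by
    rw [hg, abs_mul, abs_of_pos (Real.exp_pos _)]
  rw [h1]
  calc Real.exp (-lam * tx) * |h (γ tx)| ≤ 1 * δ := by
        apply mul_le_mul _ (hsmall _ hreach) (abs_nonneg _) zero_le_one
        exact Real.exp_le_one_iff.mpr (by nlinarith)
    _ = δ := one_mul δ
end
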